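/- Subadditivity of symmetric polynomial ratios: for vectors x, y of n nonnegative reals each having at least k+1 nonzero entries, e_{k+1}(x+y)/e_k(x+y) ≥ e_{k+1}(x)/e_k(x) + e_{k+1}(y)/e_k(y), where x+y is the entrywise sum. -/

import Mathlib

open BigOperators



noncomputable def E {n : ℕ} (s : Finset (Fin n)) (k : ℕ) (x : Fin n → ℝ) : ℝ :=
  ∑ S ∈ s.powersetCard k, ∏ i ∈ S, x i

variable {n : ℕ} {s : Finset (Fin n)} {k : ℕ} {x y : Fin n → ℝ}

lemma E_zero : E s 0 x = 1 := by simp [E]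

lemma E_one : E s 1 x = ∑ i ∈ s, x i := by
  simp [E, Finset.powersetCard_one, Finset.sum_map]

lemma E_nonneg (hx : ∀ i, 0 ≤ x i) : 0 ≤ E s k x :=
  Finset.sum_nonneg fun S _ => Finset.prod_nonneg fun i _ => hx i

lemma E_pos (hx : ∀ i, 0 ≤ x i) (h : k ≤ (s.filter (fun i => x i ≠ 0)).card) :
    0 < E s k x := by
  obtain ⟨T, hTsub, hTcard⟩ := Finset.exists_subset_card_eq h
  have hT : T ∈ s.powersetCard k :=
    Finset.mem_powersetCard.2 ⟨hTsub.trans (Finset.filter_subset _ _), hTcard⟩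
  have hpos : 0 < ∏ i ∈ T, x i := by
    apply Finset.prod_pos
    intro i hi
    exact lt_of_le_of_ne (hx i) (Ne.symm (Finset.mem_filter.1 (hTsub hi)).2)
  refine lt_of_lt_of_le hpos ?_
  exact Finset.single_le_sum (f := fun S => ∏ i ∈ S, x i)
    (fun S _ => Finset.prod_nonneg fun i _ => hx i) hT

lemma E_pascal {i : Fin n} (hi : i ∈ s) :
    E s (k + 1) x = E (s.erase i) (k + 1) x + x i * E (s.erase i) k x := by
  conv_lhs => rw [E, ← Finset.insert_erase hi,
    Finset.powersetCard_succ_insert (Finset.notMem_erase i s)]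
  rw [Finset.sum_union]
  · congr 1
    rw [Finset.sum_image, E, Finset.mul_sum]
    · apply Finset.sum_congr rfl
      intro T hT
      have hiT : i ∉ T := fun h =>
        (Finset.notMem_erase i s) ((Finset.mem_powersetCard.1 hT).1 h)
      rw [Finset.prod_insert hiT]
    · intro a ha b hb hab
      have hia : i ∉ a := fun h => (Finset.notMem_erase i s) ((Finset.mem_powersetCard.1 ha).1 h)
      have hib : i ∉ b := fun h => (Finset.notMem_erase i s) ((Finset.mem_powersetCard.1 hb).1 h)
      have := congrArg (Finset.erase · i) hab
      simpa [Finset.erase_insert hia, Finset.erase_insert hib] using this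
  · rw [Finset.disjoint_left]
    intro S hS hS'
    obtain ⟨T, hT, rfl⟩ := Finset.mem_image.1 hS'
    have : i ∈ s.erase i := (Finset.mem_powersetCard.1 hS).1 (Finset.mem_insert_self i T)
    exact Finset.notMem_erase i s this

lemma E_deriv_sum :
    ∑ i ∈ s, x i * E (s.erase i) k x = (k + 1) * E s (k + 1) x := by
  have lhs : ∑ i ∈ s, x i * E (s.erase i) k x
      = ∑ p ∈ s.sigma (fun i => (s.erase i).powersetCard k), x p.1 * ∏ j ∈ p.2, x j := by
    rw [Finset.sum_sigma]
    simp [E, Finset.mul_sum]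
  have rhs : (k + 1 : ℝ) * E s (k + 1) x
      = ∑ p ∈ (s.powersetCard (k + 1)).sigma (fun S => S), ∏ j ∈ p.1, x j := by
    rw [Finset.sum_sigma, E, Finset.mul_sum]
    apply Finset.sum_congr rfl
    intro S hS
    simp only [Finset.sum_const, nsmul_eq_mul, (Finset.mem_powersetCard.1 hS).2]
    push_cast
    ring
  rw [lhs, rhs]
  apply Finset.sum_nbij' (i := fun p => ⟨insert p.1 p.2, p.1⟩)
    (j := fun p => ⟨p.2, p.1.erase p.2⟩)
  · rintro ⟨i, T⟩ hp
    simp only [Finset.mem_sigma, Finset.mem_powersetCard] at hp ⊢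
    obtain ⟨his, hT, hTcard⟩ := hp
    have hiT : i ∉ T := fun h => Finset.notMem_erase i s (hT h)
    refine ⟨⟨?_, ?_⟩, Finset.mem_insert_self _ _⟩
    · exact Finset.insert_subset his (hT.trans (Finset.erase_subset _ _))
    · rw [Finset.card_insert_of_notMem hiT, hTcard]
  · rintro ⟨S, i⟩ hp
    simp only [Finset.mem_sigma, Finset.mem_powersetCard] at hp ⊢
    obtain ⟨⟨hS, hScard⟩, hiS⟩ := hp
    refine ⟨hS hiS, ?_, ?_⟩
    · intro j hj
      exact Finset.mem_erase.2 ⟨(Finset.mem_erase.1 hj).1, hS (Finset.mem_erase.1 hj).2⟩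
    · rw [Finset.card_erase_of_mem hiS, hScard]
      rfl
  · rintro ⟨i, T⟩ hp
    simp only [Finset.mem_sigma, Finset.mem_powersetCard] at hp
    have hiT : i ∉ T := fun h => Finset.notMem_erase i s (hp.2.1 h)
    simp [Finset.erase_insert hiT]
  · rintro ⟨S, i⟩ hp
    simp only [Finset.mem_sigma, Finset.mem_powersetCard] at hp
    simp [Finset.insert_erase hp.2]
  · rintro ⟨i, T⟩ hp
    simp only [Finset.mem_sigma, Finset.mem_powersetCard] at hp
    have hiT : i ∉ T := fun h => Finset.notMem_erase i s (hp.2.1 h)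
    simp [Finset.prod_insert hiT]

lemma filter_erase_card {z : Fin n → ℝ} {i : Fin n} {m : ℕ}
    (h : m + 1 ≤ (s.filter (fun j => z j ≠ 0)).card) :
    m ≤ ((s.erase i).filter (fun j => z j ≠ 0)).card := by
  rw [Finset.filter_erase]
  have := Finset.pred_card_le_card_erase (s := s.filter (fun j => z j ≠ 0)) (a := i)
  omega

lemma ratio_formula {z : Fin n → ℝ} (hz : ∀ i, 0 ≤ z i)
    (h : k + 2 ≤ (s.filter (fun j => z j ≠ 0)).card) :
    ((k : ℝ) + 2) * (E s (k + 2) z / E s (k + 1) z)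
      = ∑ i ∈ s, z i * (E (s.erase i) (k + 1) z / E (s.erase i) k z)
          / (z i + E (s.erase i) (k + 1) z / E (s.erase i) k z) := by
  have hEs : 0 < E s (k + 1) z := E_pos hz (le_trans (by omega) h)
  have key : ((k : ℝ) + 2) * E s (k + 2) z = ∑ i ∈ s, z i * E (s.erase i) (k + 1) z := by
    have h' := E_deriv_sum (s := s) (x := z) (k := k + 1)
    have e2 : E s (k + 1 + 1) z = E s (k + 2) z := rfl
    rw [e2] at h'
    rw [h']
    push_cast
    ring
  rw [mul_div_assoc', key, Finset.sum_div]
  apply Finset.sum_congr rfl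
  intro i hi
  have hA : 0 < E (s.erase i) (k + 1) z := E_pos hz (filter_erase_card h)
  have hB : 0 < E (s.erase i) k z := E_pos hz (filter_erase_card (le_trans (by omega) h))
  have hps : E s (k + 1) z = E (s.erase i) (k + 1) z + z i * E (s.erase i) k z := E_pascal hi
  rw [hps]
  have hzi := hz i
  rw [div_eq_div_iff (by positivity) (by positivity)]
  field_simp
  ring

lemma harmonic_super {a c p q P : ℝ} (ha : 0 ≤ a) (hc : 0 ≤ c) (hp : 0 < p) (hq : 0 < q)
    (hP : p + q ≤ P) :
    a * p / (a + p) + c * q / (c + q) ≤ (a + c) * P / (a + c + P) := by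
  have h1 : 0 < a + p := by linarith
  have h2 : 0 < c + q := by linarith
  have h3 : 0 < a + c + P := by linarith
  rw [div_add_div _ _ (ne_of_gt h1) (ne_of_gt h2), div_le_div_iff₀ (by positivity) h3]
  nlinarith [sq_nonneg (a*q - c*p), mul_nonneg ha hc, mul_pos hp hq,
    mul_nonneg (mul_nonneg ha hc) (sub_nonneg.2 hP),
    mul_nonneg ha (sub_nonneg.2 hP), mul_nonneg hc (sub_nonneg.2 hP),
    mul_nonneg (mul_nonneg ha ha) (sub_nonneg.2 hP),
    mul_nonneg (mul_nonneg hc hc) (sub_nonneg.2 hP),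
    mul_nonneg (mul_nonneg ha hc) hp.le, mul_nonneg (mul_nonneg ha hc) hq.le,
    mul_nonneg (mul_nonneg ha hp.le) (sub_nonneg.2 hP),
    mul_nonneg (mul_nonneg hc hq.le) (sub_nonneg.2 hP),
    mul_nonneg (mul_nonneg ha hq.le) (sub_nonneg.2 hP),
    mul_nonneg (mul_nonneg hc hp.le) (sub_nonneg.2 hP)]

lemma marcus (k : ℕ) : ∀ (s : Finset (Fin n)) (x y : Fin n → ℝ), (∀ i, 0 ≤ x i) →
    (∀ i, 0 ≤ y i) → (k + 1 ≤ (s.filter (fun i => x i ≠ 0)).card) →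
    (k + 1 ≤ (s.filter (fun i => y i ≠ 0)).card) →
    E s (k + 1) x / E s k x + E s (k + 1) y / E s k y
      ≤ E s (k + 1) (x + y) / E s k (x + y) := by
  induction k with
  | zero =>
    intro s x y hx hy hxk hyk
    simp only [zero_add, E_zero, E_one, div_one]
    rw [← Finset.sum_add_distrib]
    apply le_of_eq
    apply Finset.sum_congr rfl
    intro i _
    rfl
  | succ k ih =>
    intro s x y hx hy hxk hyk
    have hxy : ∀ i, 0 ≤ (x + y) i := fun i => add_nonneg (hx i) (hy i)
    have hsub : s.filter (fun i => x i ≠ 0) ⊆ s.filter (fun i => (x + y) i ≠ 0) := by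
      intro i hi
      rw [Finset.mem_filter] at hi ⊢
      refine ⟨hi.1, ?_⟩
      have : 0 < x i := lt_of_le_of_ne (hx i) (Ne.symm hi.2)
      have : 0 < x i + y i := by have := hy i; linarith
      exact ne_of_gt this
    have hxyk : k + 2 ≤ (s.filter (fun i => (x + y) i ≠ 0)).card :=
      le_trans hxk (Finset.card_le_card hsub)
    -- the three ratio formulas
    have fx := ratio_formula (s := s) (k := k) hx hxk
    have fy := ratio_formula (s := s) (k := k) hy hyk
    have fxy := ratio_formula (s := s) (k := k) hxy hxyk
    have hk2 : (0:ℝ) < (k : ℝ) + 2 := by positivity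
    rw [← mul_le_mul_iff_right₀ hk2, mul_add, fx, fy, fxy, ← Finset.sum_add_distrib]
    apply Finset.sum_le_sum
    intro i hi
    set p := E (s.erase i) (k + 1) x / E (s.erase i) k x with hp
    set q := E (s.erase i) (k + 1) y / E (s.erase i) k y with hq
    set P := E (s.erase i) (k + 1) (x + y) / E (s.erase i) k (x + y) with hP
    have hpp : 0 < p :=
      div_pos (E_pos hx (filter_erase_card hxk))
        (E_pos hx (filter_erase_card (le_trans (by omega) hxk)))
    have hqq : 0 < q :=
      div_pos (E_pos hy (filter_erase_card hyk))
        (E_pos hy (filter_erase_card (le_trans (by omega) hyk)))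
    have hPpq : p + q ≤ P :=
      ih (s.erase i) x y hx hy (filter_erase_card hxk) (filter_erase_card hyk)
    have := harmonic_super (a := x i) (c := y i) (hx i) (hy i) hpp hqq hPpq
    simpa using this


/-- The elementary symmetric polynomial of degree `k` in the entries of `x`. -/
noncomputable def esym {n : ℕ} (k : ℕ) (x : Fin n → ℝ) : ℝ :=
  ∑ S ∈ Finset.univ.powersetCard k, ∏ i ∈ S, x i

/-- Superadditivity of symmetric polynomial ratios: for vectors `x, y` of `n`
nonnegative reals, each having at least `k+1` nonzero entries,
`e_{k+1}(x+y)/e_k(x+y) ≥ e_{k+1}(x)/e_k(x) + e_{k+1}(y)/e_k(y)`. -/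
theorem stmt_15 (n k : ℕ) (x y : Fin n → ℝ)
    (hx : ∀ i, 0 ≤ x i) (hy : ∀ i, 0 ≤ y i)
    (hxk : k + 1 ≤ (Finset.univ.filter (fun i => x i ≠ 0)).card)
    (hyk : k + 1 ≤ (Finset.univ.filter (fun i => y i ≠ 0)).card) :
    esym (k + 1) x / esym k x + esym (k + 1) y / esym k y
      ≤ esym (k + 1) (x + y) / esym k (x + y) := by
  have h : ∀ (m : ℕ) (z : Fin n → ℝ), esym m z = E Finset.univ m z := fun m z => rfl
  rw [h, h, h, h, h, h]
  exact marcus k Finset.univ x y hx hy hxk hyk
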